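/- Let a, b be odd positive integers, 0 < q < 1 real, and x ≥ 0, n ≥ 0. Then [2]_{q^b} [a]_q^n Σ_{j=0}^{a-1} (-1)^j q^{b j} E_{n,q^a}(b x + b j / a) = [2]_{q^a} [b]_q^n Σ_{j=0}^{b-1} (-1)^j q^{a j} E_{n,q^b}(a x + a j / b). -/

import Mathlib

open Finset

/-- q-analogue [z]_q = (1 - q^z)/(1 - q) (real rpow). -/
noncomputable def qn (q z : ℝ) : ℝ := (1 - q ^ z) / (1 - q)

/-- q-Euler polynomial E_{n,q}(x) = [2]_q Σ_{m} (-1)^m q^m [m+x]_q^n. -/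
noncomputable def qE (n : ℕ) (q x : ℝ) : ℝ :=
  (1 + q) * ∑' m : ℕ, (-1 : ℝ) ^ m * q ^ m * (qn q ((m : ℝ) + x)) ^ n

/-- Alternating q-power sum S*_{n,i,q}(a). -/
noncomputable def qS (n i a : ℕ) (q : ℝ) : ℝ :=
  ∑ j ∈ Finset.range a, (-1 : ℝ) ^ j * q ^ ((n + 1 - i) * j) * (qn q (j : ℝ)) ^ i

section Aux

variable {q : ℝ}

lemma qn_nonneg (hq0 : 0 < q) (hq1 : q < 1) {z : ℝ} (hz : 0 ≤ z) : 0 ≤ qn q z := by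
  unfold qn
  apply div_nonneg _ (by linarith)
  have := Real.rpow_le_one hq0.le hq1.le hz
  linarith

lemma qn_le_inv (hq0 : 0 < q) (hq1 : q < 1) {z : ℝ} : qn q z ≤ (1 - q)⁻¹ := by
  unfold qn
  rw [← one_div, div_le_div_iff₀ (by linarith) (by linarith)]
  have := Real.rpow_pos_of_pos hq0 z
  nlinarith

lemma qn_mul (hq0 : 0 < q) (hq1 : q < 1) {a : ℕ} (ha : 0 < a) (z : ℝ) :
    qn q (a : ℝ) * qn (q ^ a) z = qn q ((a : ℝ) * z) := by
  have hqa : (q : ℝ) ^ a = q ^ ((a : ℝ)) := (Real.rpow_natCast q a).symm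
  have h1 : ((q : ℝ) ^ a) ^ z = q ^ ((a : ℝ) * z) := by
    rw [hqa]; exact (Real.rpow_mul hq0.le _ _).symm
  have hlt : q ^ ((a : ℝ)) < 1 :=
    Real.rpow_lt_one hq0.le hq1 (by exact_mod_cast ha)
  unfold qn
  rw [h1, hqa]
  have h2 : (1 : ℝ) - q ^ ((a : ℝ)) ≠ 0 := by linarith
  have h3 : (1 : ℝ) - q ≠ 0 := by linarith
  generalize q ^ ((a : ℝ)) = A at *
  generalize q ^ ((a : ℝ) * z) = B at *
  field_simp

lemma summable_aux (hq0 : 0 < q) (hq1 : q < 1) (n : ℕ) {c : ℝ} (hc : 0 ≤ c)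
    {a : ℕ} (ha : 0 < a) (d : ℕ) :
    Summable (fun m : ℕ => (-1 : ℝ) ^ (a * m + d) * q ^ (a * m + d) *
      (qn q (((a * m + d : ℕ) : ℝ) + c)) ^ n) := by
  apply Summable.of_abs
  refine Summable.of_nonneg_of_le (fun m => abs_nonneg _) (fun m => ?_)
    ((summable_geometric_of_lt_one (by positivity)
      (pow_lt_one₀ hq0.le hq1 ha.ne')).mul_left ((1 - q)⁻¹ ^ n))
  · have hz : (0 : ℝ) ≤ ((a * m + d : ℕ) : ℝ) + c := by positivity
    have hqn0 : 0 ≤ qn q (((a * m + d : ℕ) : ℝ) + c) := qn_nonneg hq0 hq1 hz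
    rw [abs_mul, abs_mul, abs_pow, abs_neg, abs_one, one_pow, one_mul,
      abs_of_pos (pow_pos hq0 _), abs_pow, abs_of_nonneg hqn0]
    have h1 : q ^ (a * m + d) ≤ (q ^ a) ^ m := by
      rw [← pow_mul]
      exact pow_le_pow_of_le_one hq0.le hq1.le (Nat.le_add_right _ _)
    have h2 : qn q (((a * m + d : ℕ) : ℝ) + c) ^ n ≤ (1 - q)⁻¹ ^ n :=
      pow_le_pow_left₀ hqn0 (qn_le_inv hq0 hq1) n
    calc q ^ (a * m + d) * qn q (((a * m + d : ℕ) : ℝ) + c) ^ n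
        ≤ (q ^ a) ^ m * (1 - q)⁻¹ ^ n := by
          apply mul_le_mul h1 h2 (by positivity) (by positivity)
      _ = (1 - q)⁻¹ ^ n * (q ^ a) ^ m := mul_comm _ _

def dEquiv (a b : ℕ) (ha : 0 < a) (hb : 0 < b) : Fin a × ℕ ≃ Fin b × ℕ where
  toFun p := (⟨p.2 % b, Nat.mod_lt _ hb⟩, a * (p.2 / b) + p.1)
  invFun p := (⟨p.2 % a, Nat.mod_lt _ ha⟩, b * (p.2 / a) + p.1)
  left_inv := by
    rintro ⟨⟨j, hj⟩, m⟩
    have h1 : (a * (m / b) + j) % a = j := by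
      rw [Nat.mul_add_mod, Nat.mod_eq_of_lt hj]
    have h2 : (a * (m / b) + j) / a = m / b := by
      rw [Nat.mul_add_div ha, Nat.div_eq_of_lt hj, Nat.add_zero]
    ext
    · simp [h1]
    · simp only [h2]
      exact Nat.div_add_mod m b
  right_inv := by
    rintro ⟨⟨j, hj⟩, m⟩
    have h1 : (b * (m / a) + j) % b = j := by
      rw [Nat.mul_add_mod, Nat.mod_eq_of_lt hj]
    have h2 : (b * (m / a) + j) / b = m / a := by
      rw [Nat.mul_add_div hb, Nat.div_eq_of_lt hj, Nat.add_zero]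
    ext
    · simp [h1]
    · simp only [h2]
      exact Nat.div_add_mod m a

lemma side (hq0 : 0 < q) (hq1 : q < 1) (x : ℝ) (hx : 0 ≤ x)
    (n a b : ℕ) (ha : 0 < a) (hb : 0 < b) (hao : Odd a) (hbo : Odd b) :
    (1 + q ^ b) * (qn q (a : ℝ)) ^ n *
        ∑ j ∈ Finset.range a, (-1 : ℝ) ^ j * q ^ (b * j) *
          qE n (q ^ a) ((b : ℝ) * x + (b : ℝ) * (j : ℝ) / (a : ℝ)) =
    (1 + q ^ a) * (1 + q ^ b) *
      ∑' p : Fin a × ℕ, (-1 : ℝ) ^ (a * p.2 + b * p.1) * q ^ (a * p.2 + b * p.1) *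
        (qn q (((a * p.2 + b * (p.1 : ℕ) : ℕ) : ℝ) + (a : ℝ) * (b : ℝ) * x)) ^ n := by
  have hc : (0 : ℝ) ≤ (a : ℝ) * (b : ℝ) * x := by positivity
  set H : ℕ → ℝ := fun k =>
    (-1 : ℝ) ^ k * q ^ k * (qn q ((k : ℝ) + (a : ℝ) * (b : ℝ) * x)) ^ n with hH
  have hsum : Summable (fun p : Fin a × ℕ => H (a * p.2 + b * (p.1 : ℕ))) := by
    apply Summable.of_abs
    rw [summable_prod_of_nonneg (fun p => abs_nonneg _)]
    constructor
    · intro i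
      exact (summable_aux hq0 hq1 n hc ha (b * (i : ℕ))).abs
    · exact .of_finite
  have hrhs : ∑' p : Fin a × ℕ, (-1 : ℝ) ^ (a * p.2 + b * p.1) * q ^ (a * p.2 + b * p.1) *
        (qn q (((a * p.2 + b * (p.1 : ℕ) : ℕ) : ℝ) + (a : ℝ) * (b : ℝ) * x)) ^ n
      = ∑ j ∈ Finset.range a, ∑' m : ℕ, H (a * m + b * j) := by
    rw [show (fun p : Fin a × ℕ => (-1 : ℝ) ^ (a * p.2 + b * p.1) * q ^ (a * p.2 + b * p.1) *
        (qn q (((a * p.2 + b * (p.1 : ℕ) : ℕ) : ℝ) + (a : ℝ) * (b : ℝ) * x)) ^ n)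
        = (fun p : Fin a × ℕ => H (a * p.2 + b * (p.1 : ℕ))) from rfl]
    rw [Summable.tsum_prod hsum, tsum_fintype]
    exact Fin.sum_univ_eq_sum_range (fun j => ∑' m : ℕ, H (a * m + b * j)) a
  rw [hrhs, Finset.mul_sum, Finset.mul_sum]
  apply Finset.sum_congr rfl
  intro j hj
  unfold qE
  calc (1 + q ^ b) * qn q (a : ℝ) ^ n *
      ((-1 : ℝ) ^ j * q ^ (b * j) *
        ((1 + q ^ a) * ∑' m : ℕ, (-1 : ℝ) ^ m * (q ^ a) ^ m *
          qn (q ^ a) ((m : ℝ) + ((b : ℝ) * x + (b : ℝ) * (j : ℝ) / (a : ℝ))) ^ n))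
      = ∑' m : ℕ, ((1 + q ^ b) * qn q (a : ℝ) ^ n * ((-1 : ℝ) ^ j * q ^ (b * j)) * (1 + q ^ a)) *
          ((-1 : ℝ) ^ m * (q ^ a) ^ m *
            qn (q ^ a) ((m : ℝ) + ((b : ℝ) * x + (b : ℝ) * (j : ℝ) / (a : ℝ))) ^ n) := by
        rw [tsum_mul_left]; ring
    _ = ∑' m : ℕ, (1 + q ^ a) * (1 + q ^ b) * H (a * m + b * j) := ?_
    _ = (1 + q ^ a) * (1 + q ^ b) * ∑' m : ℕ, H (a * m + b * j) := tsum_mul_left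
  apply tsum_congr
  intro m
  have key : qn q (a : ℝ) ^ n *
      qn (q ^ a) ((m : ℝ) + ((b : ℝ) * x + (b : ℝ) * (j : ℝ) / (a : ℝ))) ^ n
      = qn q (((a * m + b * j : ℕ) : ℝ) + (a : ℝ) * (b : ℝ) * x) ^ n := by
    rw [← mul_pow, qn_mul hq0 hq1 ha]
    congr 2
    have ha' : (a : ℝ) ≠ 0 := Nat.cast_ne_zero.mpr ha.ne'
    push_cast
    field_simp
    ring
  have hs : ((-1 : ℝ)) ^ (a * m + b * j) = (-1 : ℝ) ^ m * (-1 : ℝ) ^ j := by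
    rw [pow_add, pow_mul, pow_mul, hao.neg_one_pow, hbo.neg_one_pow]
  have hq : q ^ (a * m + b * j) = (q ^ a) ^ m * q ^ (b * j) := by
    rw [pow_add, pow_mul]
  rw [hH]
  simp only
  rw [hs, hq, ← key]
  ring

end Aux

theorem qEuler_symmetry (q : ℝ) (hq0 : 0 < q) (hq1 : q < 1) (x : ℝ) (hx : 0 ≤ x)
    (n a b : ℕ) (ha : 0 < a) (hb : 0 < b) (hao : Odd a) (hbo : Odd b) :
    (1 + q ^ b) * (qn q (a : ℝ)) ^ n *
        ∑ j ∈ Finset.range a, (-1 : ℝ) ^ j * q ^ (b * j) *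
          qE n (q ^ a) ((b : ℝ) * x + (b : ℝ) * (j : ℝ) / (a : ℝ)) =
      (1 + q ^ a) * (qn q (b : ℝ)) ^ n *
        ∑ j ∈ Finset.range b, (-1 : ℝ) ^ j * q ^ (a * j) *
          qE n (q ^ b) ((a : ℝ) * x + (a : ℝ) * (j : ℝ) / (b : ℝ)) := by
  rw [side hq0 hq1 x hx n a b ha hb hao hbo, side hq0 hq1 x hx n b a hb ha hbo hao,
    show (b : ℝ) * (a : ℝ) = (a : ℝ) * (b : ℝ) from mul_comm _ _,
    mul_comm (1 + q ^ b) (1 + q ^ a)]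
  congr 1
  have he := Equiv.tsum_eq (dEquiv a b ha hb)
    (fun p : Fin b × ℕ => (-1 : ℝ) ^ (b * p.2 + a * (p.1 : ℕ)) * q ^ (b * p.2 + a * (p.1 : ℕ)) *
      (qn q (((b * p.2 + a * (p.1 : ℕ) : ℕ) : ℝ) + (a : ℝ) * (b : ℝ) * x)) ^ n)
  rw [← he]
  apply tsum_congr
  rintro ⟨⟨j, hj⟩, m⟩
  simp only [dEquiv, Equiv.coe_fn_mk]
  have harith : b * (a * (m / b) + j) + a * (m % b) = a * m + b * j := by
    conv_rhs => rw [← Nat.div_add_mod m b]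
    ring
  rw [harith]
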